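/- Let X be a p×q real matrix of rank r. If Y is a p×q matrix whose column space is contained in the column space of X, or whose row space is contained in the row space of X, then for all sufficiently small t > 0 the matrix X + tY has rank exactly r. -/
import Mathlib

open Matrix

/-- The column space (span of the columns) of a `p × q` real matrix in `ℝ^p`. -/
def colSpace5 (p q : ℕ) (M : Matrix (Fin p) (Fin q) ℝ) : Submodule ℝ (Fin p → ℝ) :=
  Submodule.span ℝ (Set.range fun j : Fin q => fun i => M i j)

/-- The row space (span of the rows) of a `p × q` real matrix in `ℝ^q`. -/
def rowSpace5 (p q : ℕ) (M : Matrix (Fin p) (Fin q) ℝ) : Submodule ℝ (Fin q → ℝ) :=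
  Submodule.span ℝ (Set.range fun i : Fin p => fun j => M i j)

lemma colSpace5_eq (p q : ℕ) (M : Matrix (Fin p) (Fin q) ℝ) :
    colSpace5 p q M = LinearMap.range M.mulVecLin := by
  rw [Matrix.range_mulVecLin, colSpace5]
  rfl

lemma exists_factor (p q : ℕ) (X Y : Matrix (Fin p) (Fin q) ℝ)
    (h : colSpace5 p q Y ≤ colSpace5 p q X) :
    ∃ B : Matrix (Fin q) (Fin q) ℝ, Y = X * B := by
  rw [colSpace5_eq, colSpace5_eq] at h
  have hcol : ∀ j : Fin q, ∃ b : Fin q → ℝ, X.mulVec b = fun i => Y i j := by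
    intro j
    have : (fun i => Y i j) ∈ LinearMap.range Y.mulVecLin := by
      rw [Matrix.range_mulVecLin]
      exact Submodule.subset_span ⟨j, rfl⟩
    exact h this
  choose b hb using hcol
  refine ⟨(Matrix.of b)ᵀ, ?_⟩
  ext i j
  have := congrFun (hb j) i
  simpa [Matrix.mul_apply, Matrix.mulVec, dotProduct, mul_comm] using this.symm

lemma small_det (q : ℕ) (B : Matrix (Fin q) (Fin q) ℝ) :
    ∃ ε > (0 : ℝ), ∀ t : ℝ, |t| < ε → IsUnit (1 + t • B).det := by
  have hc : Continuous fun t : ℝ => (1 + t • B).det := by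
    apply Continuous.matrix_det
    exact continuous_const.add (continuous_id.smul continuous_const)
  have hne : ∀ᶠ t in nhds (0 : ℝ), (1 + t • B).det ≠ 0 := by
    have := hc.continuousAt (x := 0)
    exact this.eventually_ne (by simp)
  rw [Metric.eventually_nhds_iff] at hne
  obtain ⟨ε, hε, h⟩ := hne
  exact ⟨ε, hε, fun t ht => isUnit_iff_ne_zero.mpr (h (by simpa [Real.dist_eq] using ht))⟩

lemma col_case (p q r : ℕ) (X Y : Matrix (Fin p) (Fin q) ℝ) (hX : X.rank = r)
    (h : colSpace5 p q Y ≤ colSpace5 p q X) :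
    ∃ ε > (0 : ℝ), ∀ t : ℝ, 0 < t → t < ε → (X + t • Y).rank = r := by
  obtain ⟨B, rfl⟩ := exists_factor p q X Y h
  obtain ⟨ε, hε, hdet⟩ := small_det q B
  refine ⟨ε, hε, fun t ht htε => ?_⟩
  have : X + t • (X * B) = X * (1 + t • B) := by
    rw [Matrix.mul_add, Matrix.mul_one, Matrix.mul_smul]
  rw [this, Matrix.rank_mul_eq_left_of_isUnit_det _ _ (hdet t (by rw [abs_of_pos ht]; exact htε)),
    hX]

lemma rowSpace5_eq_col (p q : ℕ) (M : Matrix (Fin p) (Fin q) ℝ) :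
    rowSpace5 p q M = colSpace5 q p Mᵀ := rfl

/-- If `X` has rank `r` and the column space of `Y` is contained in that of `X`, or the row
space of `Y` is contained in that of `X`, then `X + tY` has rank exactly `r` for all
sufficiently small `t > 0`. -/
theorem stmt5 (p q r : ℕ) (X Y : Matrix (Fin p) (Fin q) ℝ) (hX : X.rank = r)
    (hY : colSpace5 p q Y ≤ colSpace5 p q X ∨ rowSpace5 p q Y ≤ rowSpace5 p q X) :
    ∃ ε > (0 : ℝ), ∀ t : ℝ, 0 < t → t < ε → (X + t • Y).rank = r := by
  rcases hY with h | h
  · exact col_case p q r X Y hX h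
  · rw [rowSpace5_eq_col, rowSpace5_eq_col] at h
    have hXt : Xᵀ.rank = r := by rw [Matrix.rank_transpose, hX]
    obtain ⟨ε, hε, hr⟩ := col_case q p r Xᵀ Yᵀ hXt h
    refine ⟨ε, hε, fun t ht htε => ?_⟩
    have := hr t ht htε
    rw [← Matrix.rank_transpose, Matrix.transpose_add, Matrix.transpose_smul]
    exact this
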